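/- arXiv:2605.03825 — 2 statements merged into one kernel-verified Lean document; each statement's English description precedes it below -/
import Mathlib

section
/- Let G be a graph in which no two vertices of equal degree are endpoints of a path on 2ℓ+2 vertices, let u₁, u₂ have equal degree, and let B₁ = N(u₁)∖N[u₂], B₂ = N(u₂)∖N[u₁]. Then the bipartite subgraph G[B₁, B₂] contains no path on 2ℓ vertices. -/
/-- The bipartite subgraph of `G` with parts `S` and `T`: edges of `G` with
one endpoint in `S` and the other in `T`. -/
def bipartiteBetween {V : Type*} (G : SimpleGraph V) (S T : Set V) :
    SimpleGraph V where
  Adj x y := G.Adj x y ∧ ((x ∈ S ∧ y ∈ T) ∨ (x ∈ T ∧ y ∈ S))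
  symm := ⟨fun x y ⟨h, hc⟩ =>
    ⟨h.symm, hc.elim (fun ⟨a, b⟩ => Or.inr ⟨b, a⟩) (fun ⟨a, b⟩ => Or.inl ⟨b, a⟩)⟩⟩
  loopless := ⟨fun x ⟨h, _⟩ => G.irrefl h⟩

/-- If no two vertices of equal degree in `G` are endpoints of a path on
`2ℓ+2` vertices, and `u₁, u₂` have equal degree, then the bipartite subgraph
`G[B₁, B₂]` with `B₁ = N(u₁)∖N[u₂]`, `B₂ = N(u₂)∖N[u₁]` contains no path on
`2ℓ` vertices. -/
theorem bipartite_pieces_path_free {V : Type*} [Fintype V] [DecidableEq V]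
    (G : SimpleGraph V) [DecidableRel G.Adj] (ℓ : ℕ) (u₁ u₂ : V)
    (hne : u₁ ≠ u₂) (hdeg : G.degree u₁ = G.degree u₂)
    (hfree : ∀ (x y : V), x ≠ y → G.degree x = G.degree y →
      ∀ (p : G.Walk x y), p.IsPath → p.length + 1 ≠ 2 * ℓ + 2) :
    ∀ (x y : V)
      (p : (bipartiteBetween G (G.neighborSet u₁ \ (G.neighborSet u₂ ∪ {u₂}))
              (G.neighborSet u₂ \ (G.neighborSet u₁ ∪ {u₁}))).Walk x y),
      p.IsPath → p.length + 1 ≠ 2 * ℓ := by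
  set S : Set V := G.neighborSet u₁ \ (G.neighborSet u₂ ∪ {u₂}) with hS
  set T : Set V := G.neighborSet u₂ \ (G.neighborSet u₁ ∪ {u₁}) with hT
  have hdisj : ∀ v, v ∈ S → v ∈ T → False := by
    rintro v ⟨hv1, hv2⟩ ⟨hv3, hv4⟩
    exact hv2 (Or.inl hv3)
  have hu1S : u₁ ∉ S := fun ⟨h1, _⟩ => G.irrefl h1
  have hu1T : u₁ ∉ T := fun ⟨_, h2⟩ => h2 (Or.inr rfl)
  have hu2S : u₂ ∉ S := fun ⟨_, h2⟩ => h2 (Or.inr rfl)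
  have hu2T : u₂ ∉ T := fun ⟨h1, _⟩ => G.irrefl h1
  -- every vertex of a walk except possibly the last endpoint lies in S ∪ T
  have hsupp : ∀ (x y : V) (p : (bipartiteBetween G S T).Walk x y),
      ∀ v ∈ p.support, v = y ∨ v ∈ S ∪ T := by
    intro x y p
    induction p with
    | nil => intro v hv; simp at hv; exact Or.inl hv
    | cons h q ih =>
      intro v hv
      rw [SimpleGraph.Walk.support_cons] at hv
      rcases List.mem_cons.mp hv with hv | hv
      · subst hv
        rcases h.2 with ⟨ha, _⟩ | ⟨ha, _⟩
        · exact Or.inr (Or.inl ha)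
        · exact Or.inr (Or.inr ha)
      · exact ih v hv
  -- parity lemma
  have hpar : ∀ (x y : V) (p : (bipartiteBetween G S T).Walk x y),
      (x ∈ S → ((Even p.length → y ∈ S) ∧ (Odd p.length → y ∈ T))) ∧
      (x ∈ T → ((Even p.length → y ∈ T) ∧ (Odd p.length → y ∈ S))) := by
    intro x y p
    induction p with
    | nil =>
      refine ⟨fun hx => ⟨fun _ => hx, fun ho => ?_⟩, fun hx => ⟨fun _ => hx, fun ho => ?_⟩⟩ <;>
        simpa using ho
    | @cons a b c h q ih =>
      constructor
      · intro ha
        have hb : b ∈ T := by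
          rcases h.2 with ⟨_, hb⟩ | ⟨ha', _⟩
          · exact hb
          · exact absurd ha' (fun ha' => hdisj a ha ha')
        refine ⟨fun he => ?_, fun ho => ?_⟩
        · rw [SimpleGraph.Walk.length_cons] at he
          have : Odd q.length := Nat.not_even_iff_odd.mp (Nat.even_add_one.mp he)
          exact (ih.2 hb).2 this
        · rw [SimpleGraph.Walk.length_cons] at ho
          have : Even q.length := by
            rcases ho with ⟨k, hk⟩; exact ⟨k, by omega⟩
          exact (ih.2 hb).1 this
      · intro ha
        have hb : b ∈ S := by
          rcases h.2 with ⟨ha', _⟩ | ⟨_, hb⟩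
          · exact absurd ha' (fun ha' => hdisj a ha' ha)
          · exact hb
        refine ⟨fun he => ?_, fun ho => ?_⟩
        · rw [SimpleGraph.Walk.length_cons] at he
          have : Odd q.length := Nat.not_even_iff_odd.mp (Nat.even_add_one.mp he)
          exact (ih.1 hb).2 this
        · rw [SimpleGraph.Walk.length_cons] at ho
          have : Even q.length := by
            rcases ho with ⟨k, hk⟩; exact ⟨k, by omega⟩
          exact (ih.1 hb).1 this
  intro x y p hp hlen
  have hℓ : 1 ≤ ℓ := by omega
  have hplen : p.length = 2 * ℓ - 1 := by omega
  have hodd : Odd p.length := ⟨ℓ - 1, by omega⟩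
  have hpos : 0 < p.length := by omega
  -- x is in S ∪ T via the first edge
  have hx : x ∈ S ∪ T := by
    cases p with
    | nil => simp at hpos
    | cons h q =>
      rcases h.2 with ⟨ha, _⟩ | ⟨ha, _⟩
      · exact Or.inl ha
      · exact Or.inr ha
  have hle : bipartiteBetween G S T ≤ G := fun a b hab => hab.1
  -- symmetric construction
  have main : ∀ (x y : V) (p : (bipartiteBetween G S T).Walk x y), p.IsPath →
      p.length = 2 * ℓ - 1 → x ∈ S → y ∈ T → False := by
    intro x y p hp hplen hxS hyT
    have hxadj : G.Adj u₁ x := hxS.1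
    have hyadj : G.Adj y u₂ := (SimpleGraph.mem_neighborSet _ _ _).mp hyT.1 |>.symm
    set p' : G.Walk x y := p.mapLe hle with hp'
    have hsupp' : p'.support = p.support := by
      rw [hp']
      show (SimpleGraph.Walk.map _ p).support = p.support
      rw [SimpleGraph.Walk.support_map]
      exact List.map_id p.support
    have hlen' : p'.length = p.length := by
      simp [hp', SimpleGraph.Walk.mapLe, SimpleGraph.Walk.length_map]
    have hu1 : u₁ ∉ p.support := by
      intro hmem
      rcases hsupp x y p u₁ hmem with h | h | h
      · exact hu1T (h ▸ hyT)
      · exact hu1S h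
      · exact hu1T h
    have hu2 : u₂ ∉ p.support := by
      intro hmem
      rcases hsupp x y p u₂ hmem with h | h | h
      · exact hu2T (h ▸ hyT)
      · exact hu2S h
      · exact hu2T h
    set w : G.Walk u₁ u₂ := SimpleGraph.Walk.cons hxadj (p'.concat hyadj) with hw
    have hwlen : w.length = p.length + 2 := by
      simp [hw, SimpleGraph.Walk.length_concat, hlen']
    have hwpath : w.IsPath := by
      rw [SimpleGraph.Walk.isPath_def, hw, SimpleGraph.Walk.support_cons,
        SimpleGraph.Walk.support_concat, hsupp']
      refine List.nodup_cons.mpr ⟨?_, ?_⟩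
      · rw [List.mem_append]
        rintro (h | h)
        · exact hu1 h
        · exact hne (List.mem_singleton.mp h)
      · show (p.support ++ [u₂]).Nodup
        refine List.Nodup.append hp.support_nodup (List.nodup_singleton _) ?_
        intro a ha hb
        rw [List.mem_singleton] at hb
        exact hu2 (hb ▸ ha)
    exact hfree u₁ u₂ hne hdeg w hwpath (by omega)
  rcases hx with hxS | hxT
  · exact main x y p hp hplen hxS (((hpar x y p).1 hxS).2 hodd)
  · -- use the reversed walk
    have hyS : y ∈ S := ((hpar x y p).2 hxT).2 hodd
    have := main y x p.reverse hp.reverse (by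
      rw [SimpleGraph.Walk.length_reverse]; exact hplen) hyS hxT
    exact this
end

section
/- Let G be a graph on 2n+1 vertices with at least n²+n edges, and suppose the largest repeated degree β satisfies β ≤ n. Then the maximum degree Δ of G satisfies Δ ≥ n + √n, provided n is sufficiently large. -/
private lemma gauss_aux (t : ℕ) : (∑ i ∈ Finset.range t, (i + 1)) * 2 = t * (t + 1) := by
  induction t with
  | zero => simp
  | succ s ih => rw [Finset.sum_range_succ, add_mul, ih]; ring

private lemma arith_case1 (n β t : ℤ) (hn : 1 ≤ n) (hβ0 : 0 ≤ β) (ht0 : 0 ≤ t)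
    (hβn : β ≤ n) (hbtn : β + t ≤ n)
    (key : 4 * (n ^ 2 + n) ≤ t * (t + 1) + 2 * β * (2 * n + 1)) : False := by
  nlinarith [mul_nonneg ht0 (by linarith : (0:ℤ) ≤ n - β - t),
    mul_nonneg (by linarith : (0:ℤ) ≤ n - t) (by linarith : (0:ℤ) ≤ n - β),
    mul_nonneg (by linarith : (0:ℤ) ≤ n) (by linarith : (0:ℤ) ≤ n - β)]

private lemma arith_case2 (n β t k : ℤ) (hn : 1 ≤ n) (hβ0 : 0 ≤ β) (ht0 : 0 ≤ t)
    (hβn : β ≤ n) (hbt : β + t = n + k) (hk1 : 1 ≤ k) (hk2 : k ^ 2 ≤ n - 1)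
    (hkn : k ≤ n - 1)
    (key : 4 * (n ^ 2 + n) ≤ t * (t + 1) + 2 * β * (2 * n + 1)) : False := by
  nlinarith [mul_nonneg hβ0 (by linarith : (0:ℤ) ≤ n - β),
    mul_nonneg (by linarith : (0:ℤ) ≤ n - β) (by linarith : (0:ℤ) ≤ 3 * n + 1 - 2 * k)]

/-- If `G` has `2n+1` vertices, at least `n²+n` edges, and the largest repeated
degree `β` satisfies `β ≤ n`, then for sufficiently large `n` the maximum
degree `Δ` satisfies `Δ ≥ n + √n`. -/
theorem max_degree_ge_of_beta_le :
    ∃ N : ℕ, ∀ n : ℕ, N ≤ n →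
    ∀ (V : Type) [Fintype V] [DecidableEq V] (G : SimpleGraph V)
      [DecidableRel G.Adj] (Δ β : ℕ),
      Fintype.card V = 2 * n + 1 →
      n ^ 2 + n ≤ G.edgeFinset.card →
      (∀ v : V, G.degree v ≤ Δ) → (∃ v : V, G.degree v = Δ) →
      (∃ u v : V, u ≠ v ∧ G.degree u = β ∧ G.degree v = β) →
      (∀ m : ℕ, (∃ u v : V, u ≠ v ∧ G.degree u = m ∧ G.degree v = m) → m ≤ β) →
      β ≤ n →
      (n : ℝ) + Real.sqrt n ≤ (Δ : ℝ) := by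
  classical
  refine ⟨1, fun n hn V _ _ G _ Δ β hcard hE hΔle hΔex hβex hmax hβn => ?_⟩
  by_contra hlt
  push_neg at hlt
  obtain ⟨u0, v0, huv0, hu0, hv0⟩ := hβex
  have hβΔ : β ≤ Δ := hu0 ▸ hΔle u0
  have hsum : ∑ v : V, G.degree v = 2 * G.edgeFinset.card :=
    G.sum_degrees_eq_twice_card_edges
  set S : Finset V := Finset.univ.filter (fun v => β < G.degree v) with hSdef
  have hinj : ∀ a ∈ S, ∀ b ∈ S, G.degree a = G.degree b → a = b := by
    intro a ha b hb hab
    by_contra hne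
    have h1 : G.degree a ≤ β := hmax _ ⟨a, b, hne, rfl, hab.symm⟩
    have h2 : β < G.degree a := by simpa [hSdef] using ha
    omega
  have himg : S.image (fun v => G.degree v) ⊆ Finset.Ioc β Δ := by
    intro m hm
    simp only [Finset.mem_image] at hm
    obtain ⟨a, ha, rfl⟩ := hm
    have h2 : β < G.degree a := by simpa [hSdef] using ha
    exact Finset.mem_Ioc.mpr ⟨h2, hΔle a⟩
  have h1 : ∑ a ∈ S, (G.degree a - β) = ∑ m ∈ S.image (fun v => G.degree v), (m - β) :=
    (Finset.sum_image (f := fun m => m - β) (g := fun v => G.degree v) hinj).symm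
  have h2 : ∑ m ∈ S.image (fun v => G.degree v), (m - β) ≤ ∑ m ∈ Finset.Ioc β Δ, (m - β) :=
    Finset.sum_le_sum_of_subset himg
  set t := Δ - β with htdef
  have h3 : (∑ m ∈ Finset.Ioc β Δ, (m - β)) * 2 = t * (t + 1) := by
    have hIoc : Finset.Ioc β Δ = Finset.Ico (β + 1) (Δ + 1) := by
      ext x; simp [Nat.lt_succ_iff, Nat.succ_le_iff]
    rw [hIoc, Finset.sum_Ico_eq_sum_range]
    have hrt : Δ + 1 - (β + 1) = t := by omega
    rw [hrt]
    have : ∑ i ∈ Finset.range t, (β + 1 + i - β) = ∑ i ∈ Finset.range t, (i + 1) :=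
      Finset.sum_congr rfl (fun i _ => by omega)
    rw [this, gauss_aux]
  have h4 : ∑ a ∈ S, G.degree a = (∑ a ∈ S, (G.degree a - β)) + S.card * β := by
    have : ∑ a ∈ S, G.degree a = ∑ a ∈ S, ((G.degree a - β) + β) := by
      apply Finset.sum_congr rfl
      intro a ha
      have h2 : β < G.degree a := by simpa [hSdef] using ha
      omega
    rw [this, Finset.sum_add_distrib, Finset.sum_const, smul_eq_mul]
  have h5 : ∑ a ∈ Sᶜ, G.degree a ≤ Sᶜ.card * β := by
    calc ∑ a ∈ Sᶜ, G.degree a ≤ ∑ _a ∈ Sᶜ, β := by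
          apply Finset.sum_le_sum
          intro a ha
          have hna : G.degree a ≤ β := by
            have := Finset.mem_compl.mp ha
            simp [hSdef, Finset.mem_filter] at this
            omega
          exact hna
      _ = Sᶜ.card * β := by rw [Finset.sum_const, smul_eq_mul]
  have hsplit : ∑ a ∈ S, G.degree a + ∑ a ∈ Sᶜ, G.degree a = ∑ v : V, G.degree v :=
    Finset.sum_add_sum_compl S _
  have hScard : S.card + Sᶜ.card = 2 * n + 1 := by
    rw [Finset.card_add_card_compl, hcard]
  have hScard' : S.card ≤ 2 * n + 1 := by omega
  -- key inequality
  have key : 4 * (n ^ 2 + n) ≤ t * (t + 1) + 2 * β * (2 * n + 1) := by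
    have e1 : 2 * (n ^ 2 + n) ≤ ∑ v : V, G.degree v := by rw [hsum]; omega
    have e2 : ∑ v : V, G.degree v ≤ (∑ m ∈ Finset.Ioc β Δ, (m - β)) + (2 * n + 1) * β := by
      calc ∑ v : V, G.degree v = ∑ a ∈ S, G.degree a + ∑ a ∈ Sᶜ, G.degree a := hsplit.symm
        _ ≤ ((∑ a ∈ S, (G.degree a - β)) + S.card * β) + Sᶜ.card * β := by rw [h4]; omega
        _ ≤ (∑ m ∈ Finset.Ioc β Δ, (m - β)) + (2 * n + 1) * β := by
            have := le_trans (h1 ▸ h2) (le_refl _)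
            nlinarith [hScard]
    nlinarith [e1, e2, h3]
  have hΔβt : Δ = β + t := by omega
  have hn1 : 1 ≤ n := hn
  -- pass to integers
  have keyZ : 4 * ((n : ℤ) ^ 2 + n) ≤ (t : ℤ) * (t + 1) + 2 * β * (2 * n + 1) := by
    exact_mod_cast key
  have hβnZ : (β : ℤ) ≤ n := by exact_mod_cast hβn
  have hβ0 : (0 : ℤ) ≤ β := by positivity
  have ht0 : (0 : ℤ) ≤ t := by positivity
  have hn1Z : (1 : ℤ) ≤ n := by exact_mod_cast hn1
  rcases le_or_gt Δ n with hΔn | hΔn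
  · -- Δ ≤ n
    have hbtn0 : β + t ≤ n := by omega
    have hbtn : (β : ℤ) + t ≤ n := by exact_mod_cast hbtn0
    exact arith_case1 n β t hn1Z hβ0 ht0 hβnZ hbtn keyZ
  · set k := Δ - n with hkdef
    have hk1 : 1 ≤ k := by omega
    have hΔnk : Δ = n + k := by omega
    have hkR : (k : ℝ) < Real.sqrt n := by
      have hc : (Δ : ℝ) = (n : ℝ) + (k : ℝ) := by exact_mod_cast hΔnk
      linarith [hlt]
    have hk2 : k ^ 2 < n := by
      have h0 : (0 : ℝ) ≤ (k : ℝ) := by positivity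
      have hsq : ((k : ℝ)) ^ 2 < (Real.sqrt n) ^ 2 := by
        apply pow_lt_pow_left₀ hkR h0; norm_num
      rw [Real.sq_sqrt (by positivity)] at hsq
      exact_mod_cast hsq
    have hkk : k ≤ k ^ 2 := Nat.le_self_pow (by norm_num) k
    have hkn : k + 1 ≤ n := by omega
    have hbt0 : β + t = n + k := by omega
    have hbt : (β : ℤ) + t = (n : ℤ) + k := by exact_mod_cast hbt0
    have hk2Z : (k : ℤ) ^ 2 ≤ (n : ℤ) - 1 := by
      have : (k : ℤ) ^ 2 < n := by exact_mod_cast hk2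
      omega
    have hk1Z : (1 : ℤ) ≤ k := by exact_mod_cast hk1
    have hknZ : (k : ℤ) ≤ (n : ℤ) - 1 := by
      have : (k : ℤ) + 1 ≤ n := by exact_mod_cast hkn
      omega
    exact arith_case2 n β t k hn1Z hβ0 ht0 hβnZ hbt hk1Z hk2Z hknZ keyZ
end
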